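/- Let K and C be convex bodies in E^d, let r > 0 be the C-inradius of K (the largest λ such that some translate of λ·C is contained in K), and let n ≥ 1 be an integer. For 0 < ρ ≤ r, let K^{ρC} denote the ρC-rounded body of K, i.e., the union of all translates of ρ·C that are contained in K, and for a compact convex set Q with nonempty interior let w_C(Q) = inf_u ( width of Q in direction u / width of C in direction u ), the infimum over unit vectors u, be the minimal C-width of Q. Then there exists a uniquely determined ρ ∈ (0, r] such that w_C(K^{ρC}) = n·ρ (the n-th successive C-inradius of K). -/

import Mathlib

open scoped RealInnerProductSpace

/-- The width of a set `Q` in direction `u`. -/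
noncomputable def dirWidth {d : ℕ} (Q : Set (EuclideanSpace ℝ (Fin d)))
    (u : EuclideanSpace ℝ (Fin d)) : ℝ :=
  sSup ((fun x => ⟪x, u⟫) '' Q) - sInf ((fun x => ⟪x, u⟫) '' Q)

/-- The minimal `C`-width of `Q`: the infimum over unit directions `u` of the ratio of
the width of `Q` in direction `u` to the width of `C` in direction `u`. -/
noncomputable def relMinWidth {d : ℕ} (C Q : Set (EuclideanSpace ℝ (Fin d))) : ℝ :=
  ⨅ u : {v : EuclideanSpace ℝ (Fin d) // ‖v‖ = 1}, dirWidth Q u / dirWidth C u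

/-- The `ρC`-rounded body of `K`: the union of all translates of `ρ • C` contained
in `K`. -/
def roundedBody {d : ℕ} (K C : Set (EuclideanSpace ℝ (Fin d))) (ρ : ℝ) :
    Set (EuclideanSpace ℝ (Fin d)) :=
  ⋃ t ∈ {t : EuclideanSpace ℝ (Fin d) | (fun x => t + ρ • x) '' C ⊆ K},
    (fun x => t + ρ • x) '' C

open Set

/-- The set of translation vectors `t` with `t + ρ • C ⊆ K`. -/
def Tset {d : ℕ} (K C : Set (EuclideanSpace ℝ (Fin d))) (ρ : ℝ) :
    Set (EuclideanSpace ℝ (Fin d)) :=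
  {t | (fun x => t + ρ • x) '' C ⊆ K}

section Lemmas
variable {d : ℕ}

lemma contInner (u : EuclideanSpace ℝ (Fin d)) :
    Continuous fun x : EuclideanSpace ℝ (Fin d) => ⟪x, u⟫ :=
  continuous_id.inner continuous_const

lemma imgCompact {Q : Set (EuclideanSpace ℝ (Fin d))} (hQ : IsCompact Q)
    (u : EuclideanSpace ℝ (Fin d)) : IsCompact ((fun x => ⟪x, u⟫) '' Q) :=
  hQ.image (contInner u)

lemma dirWidth_nonneg {Q : Set (EuclideanSpace ℝ (Fin d))} (hQ : IsCompact Q)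
    (hne : Q.Nonempty) (u : EuclideanSpace ℝ (Fin d)) : 0 ≤ dirWidth Q u := by
  obtain ⟨x, hx⟩ := hne
  have hmem : ⟪x, u⟫ ∈ (fun x => ⟪x, u⟫) '' Q := ⟨x, hx, rfl⟩
  have h1 : sInf ((fun x => ⟪x, u⟫) '' Q) ≤ ⟪x, u⟫ :=
    csInf_le (imgCompact hQ u).bddBelow hmem
  have h2 : ⟪x, u⟫ ≤ sSup ((fun x => ⟪x, u⟫) '' Q) :=
    le_csSup (imgCompact hQ u).bddAbove hmem
  simp only [dirWidth]; linarith

lemma dirWidth_mono {Q1 Q2 : Set (EuclideanSpace ℝ (Fin d))} (h1 : Q1.Nonempty)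
    (h2 : IsCompact Q2) (hsub : Q1 ⊆ Q2) (u : EuclideanSpace ℝ (Fin d)) :
    dirWidth Q1 u ≤ dirWidth Q2 u := by
  have himg : (fun x => ⟪x, u⟫) '' Q1 ⊆ (fun x => ⟪x, u⟫) '' Q2 := image_mono hsub
  have hne : ((fun x => ⟪x, u⟫) '' Q1).Nonempty := h1.image _
  have hS : sSup ((fun x => ⟪x, u⟫) '' Q1) ≤ sSup ((fun x => ⟪x, u⟫) '' Q2) :=
    csSup_le_csSup (imgCompact h2 u).bddAbove hne himg
  have hI : sInf ((fun x => ⟪x, u⟫) '' Q2) ≤ sInf ((fun x => ⟪x, u⟫) '' Q1) :=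
    csInf_le_csInf (imgCompact h2 u).bddBelow hne himg
  simp only [dirWidth]; linarith

lemma dirWidth_translate_smul {S : Set (EuclideanSpace ℝ (Fin d))} (hS : IsCompact S)
    (hne : S.Nonempty) (t u : EuclideanSpace ℝ (Fin d)) {ρ : ℝ} (hρ : 0 ≤ ρ) :
    dirWidth ((fun c => t + ρ • c) '' S) u = ρ * dirWidth S u := by
  have himg : (fun x => ⟪x, u⟫) '' ((fun c => t + ρ • c) '' S)
      = (fun y => ⟪t, u⟫ + ρ * y) '' ((fun x => ⟪x, u⟫) '' S) := by
    rw [image_image, image_image]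
    apply image_congr
    intro c _
    show (⟪t + ρ • c, u⟫:ℝ) = ⟪t, u⟫ + ρ * ⟪c, u⟫
    rw [inner_add_left, real_inner_smul_left]
  have hmono : Monotone fun y : ℝ => ⟪t, u⟫ + ρ * y := fun a b hab => by simp only; linarith [mul_le_mul_of_nonneg_left hab hρ]
  have hcont : Continuous fun y : ℝ => ⟪t, u⟫ + ρ * y := by continuity
  have hSne : ((fun x => ⟪x, u⟫) '' S).Nonempty := hne.image _
  have hsup : sSup ((fun y => ⟪t, u⟫ + ρ * y) '' ((fun x => ⟪x, u⟫) '' S))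
      = ⟪t, u⟫ + ρ * sSup ((fun x => ⟪x, u⟫) '' S) :=
    (hmono.map_csSup_of_continuousAt hcont.continuousAt hSne (imgCompact hS u).bddAbove).symm
  have hinf : sInf ((fun y => ⟪t, u⟫ + ρ * y) '' ((fun x => ⟪x, u⟫) '' S))
      = ⟪t, u⟫ + ρ * sInf ((fun x => ⟪x, u⟫) '' S) :=
    (hmono.map_csInf_of_continuousAt hcont.continuousAt hSne (imgCompact hS u).bddBelow).symm
  simp only [dirWidth, himg, hsup, hinf]
  ring

/-- Concavity-type combination bound for directional widths. -/
lemma dirWidth_combo {Q1 Q2 Q3 : Set (EuclideanSpace ℝ (Fin d))} {a b : ℝ}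
    (h1 : IsCompact Q1) (hn1 : Q1.Nonempty) (h2 : IsCompact Q2) (hn2 : Q2.Nonempty)
    (h3 : IsCompact Q3)
    (h : ∀ x ∈ Q1, ∀ y ∈ Q2, a • x + b • y ∈ Q3) (u : EuclideanSpace ℝ (Fin d)) :
    a * dirWidth Q1 u + b * dirWidth Q2 u ≤ dirWidth Q3 u := by
  have key : ∀ x ∈ Q1, ∀ y ∈ Q2, (⟪a • x + b • y, u⟫ : ℝ) = a * ⟪x, u⟫ + b * ⟪y, u⟫ := by
    intro x _ y _
    rw [inner_add_left, real_inner_smul_left, real_inner_smul_left]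
  -- maximizers
  obtain ⟨mx, hmx⟩ : sSup ((fun x => ⟪x, u⟫) '' Q1) ∈ _ :=
    (imgCompact h1 u).sSup_mem (hn1.image _)
  obtain ⟨my, hmy⟩ : sSup ((fun x => ⟪x, u⟫) '' Q2) ∈ _ :=
    (imgCompact h2 u).sSup_mem (hn2.image _)
  obtain ⟨ix, hix⟩ : sInf ((fun x => ⟪x, u⟫) '' Q1) ∈ _ :=
    (imgCompact h1 u).sInf_mem (hn1.image _)
  obtain ⟨iy, hiy⟩ : sInf ((fun x => ⟪x, u⟫) '' Q2) ∈ _ :=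
    (imgCompact h2 u).sInf_mem (hn2.image _)
  have hsup : a * sSup ((fun x => ⟪x, u⟫) '' Q1) + b * sSup ((fun x => ⟪x, u⟫) '' Q2)
      ≤ sSup ((fun x => ⟪x, u⟫) '' Q3) := by
    rw [← hmx.2, ← hmy.2, ← key mx hmx.1 my hmy.1]
    exact le_csSup (imgCompact h3 u).bddAbove ⟨_, h mx hmx.1 my hmy.1, rfl⟩
  have hinf : sInf ((fun x => ⟪x, u⟫) '' Q3)
      ≤ a * sInf ((fun x => ⟪x, u⟫) '' Q1) + b * sInf ((fun x => ⟪x, u⟫) '' Q2) := by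
    rw [← hix.2, ← hiy.2, ← key ix hix.1 iy hiy.1]
    exact csInf_le (imgCompact h3 u).bddBelow ⟨_, h ix hix.1 iy hiy.1, rfl⟩
  simp only [dirWidth]
  nlinarith [hsup, hinf]

/-- Upper bound for the width of a "Minkowski-type" image. -/
lemma dirWidth_decomp_upper {T C : Set (EuclideanSpace ℝ (Fin d))}
    (hT : IsCompact T) (hTne : T.Nonempty) (hC : IsCompact C) (hCne : C.Nonempty)
    {ρ : ℝ} (hρ : 0 ≤ ρ) (u : EuclideanSpace ℝ (Fin d)) :
    dirWidth ((fun p : _ × _ => p.1 + ρ • p.2) '' (T ×ˢ C)) u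
      ≤ dirWidth T u + ρ * dirWidth C u := by
  have hne : ((fun x => ⟪x, u⟫) '' ((fun p : _ × _ => p.1 + ρ • p.2) '' (T ×ˢ C))).Nonempty :=
    (((hTne.prod hCne)).image _).image _
  have hsup : sSup ((fun x => ⟪x, u⟫) '' ((fun p : _ × _ => p.1 + ρ • p.2) '' (T ×ˢ C)))
      ≤ sSup ((fun x => ⟪x, u⟫) '' T) + ρ * sSup ((fun x => ⟪x, u⟫) '' C) := by
    apply csSup_le hne
    rintro z ⟨w, ⟨⟨t, c⟩, ⟨htm, hcm⟩, rfl⟩, rfl⟩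
    show (⟪t + ρ • c, u⟫ : ℝ) ≤ _
    rw [inner_add_left, real_inner_smul_left]
    have h1 : (⟪t, u⟫:ℝ) ≤ sSup ((fun x => ⟪x, u⟫) '' T) :=
      le_csSup (imgCompact hT u).bddAbove ⟨t, htm, rfl⟩
    have h2 : (⟪c, u⟫:ℝ) ≤ sSup ((fun x => ⟪x, u⟫) '' C) :=
      le_csSup (imgCompact hC u).bddAbove ⟨c, hcm, rfl⟩
    nlinarith
  have hinf : sInf ((fun x => ⟪x, u⟫) '' T) + ρ * sInf ((fun x => ⟪x, u⟫) '' C)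
      ≤ sInf ((fun x => ⟪x, u⟫) '' ((fun p : _ × _ => p.1 + ρ • p.2) '' (T ×ˢ C))) := by
    apply le_csInf hne
    rintro z ⟨w, ⟨⟨t, c⟩, ⟨htm, hcm⟩, rfl⟩, rfl⟩
    show _ ≤ (⟪t + ρ • c, u⟫ : ℝ)
    rw [inner_add_left, real_inner_smul_left]
    have h1 : sInf ((fun x => ⟪x, u⟫) '' T) ≤ ⟪t, u⟫ :=
      csInf_le (imgCompact hT u).bddBelow ⟨t, htm, rfl⟩
    have h2 : sInf ((fun x => ⟪x, u⟫) '' C) ≤ ⟪c, u⟫ :=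
      csInf_le (imgCompact hC u).bddBelow ⟨c, hcm, rfl⟩
    nlinarith
  simp only [dirWidth]
  linarith

/-- Positivity of the width of a body with `0` in its interior. -/
lemma dirWidth_pos_of_zero_mem_interior {C : Set (EuclideanSpace ℝ (Fin d))}
    (hC : IsCompact C) (h0 : 0 ∈ interior C) {u : EuclideanSpace ℝ (Fin d)}
    (hu : ‖u‖ = 1) : 0 < dirWidth C u := by
  obtain ⟨ε, hε, hball⟩ := Metric.isOpen_iff.1 isOpen_interior 0 h0
  have hmem : ∀ v : EuclideanSpace ℝ (Fin d), ‖v‖ < ε → v ∈ C := by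
    intro v hv
    exact interior_subset (hball (by simpa [Metric.mem_ball, dist_eq_norm] using hv))
  have h1 : ((ε/2) • u) ∈ C := by
    apply hmem; rw [norm_smul]; simp [hu, abs_of_pos hε]; linarith
  have h2 : (-(ε/2) • u) ∈ C := by
    apply hmem; rw [norm_smul]; simp [hu, abs_of_pos hε]; linarith
  have e1 : (⟪(ε/2) • u, u⟫ : ℝ) = ε/2 := by
    rw [real_inner_smul_left, real_inner_self_eq_norm_sq, hu]; ring
  have e2 : (⟪-(ε/2) • u, u⟫ : ℝ) = -(ε/2) := by
    rw [real_inner_smul_left, real_inner_self_eq_norm_sq, hu]; ring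
  have hle1 : (ε/2 : ℝ) ≤ sSup ((fun x => ⟪x, u⟫) '' C) := by
    rw [← e1]; exact le_csSup (imgCompact hC u).bddAbove ⟨_, h1, rfl⟩
  have hle2 : sInf ((fun x => ⟪x, u⟫) '' C) ≤ -(ε/2) := by
    rw [← e2]; exact csInf_le (imgCompact hC u).bddBelow ⟨_, h2, rfl⟩
  simp only [dirWidth]
  linarith

end Lemmas

section Lemmas2
variable {d : ℕ} {K C : Set (EuclideanSpace ℝ (Fin d))}

lemma mem_Tset_iff {ρ : ℝ} {t : EuclideanSpace ℝ (Fin d)} :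
    t ∈ Tset K C ρ ↔ ∀ c ∈ C, t + ρ • c ∈ K := by
  simp [Tset, image_subset_iff, subset_def]

lemma mem_roundedBody_iff {ρ : ℝ} {x : EuclideanSpace ℝ (Fin d)} :
    x ∈ roundedBody K C ρ ↔ ∃ t ∈ Tset K C ρ, ∃ c ∈ C, t + ρ • c = x := by
  simp [roundedBody, Tset]

lemma Tset_subset (h0 : (0:EuclideanSpace ℝ (Fin d)) ∈ C) {ρ : ℝ} :
    Tset K C ρ ⊆ K := by
  intro t ht
  have := mem_Tset_iff.1 ht 0 h0
  simpa using this

lemma Tset_isClosed (hK : IsClosed K) {ρ : ℝ} : IsClosed (Tset K C ρ) := by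
  have : Tset K C ρ = ⋂ c ∈ C, (fun t => t + ρ • c) ⁻¹' K := by
    ext t; simp [mem_Tset_iff]
  rw [this]
  exact isClosed_biInter fun c _ => hK.preimage (by continuity)

lemma Tset_isCompact (hK : IsCompact K) (h0 : (0:EuclideanSpace ℝ (Fin d)) ∈ C)
    {ρ : ℝ} : IsCompact (Tset K C ρ) :=
  hK.of_isClosed_subset (Tset_isClosed hK.isClosed) (Tset_subset h0)

lemma Tset_anti (hCconv : Convex ℝ C) (h0 : (0:EuclideanSpace ℝ (Fin d)) ∈ C)
    {ρ ρ' : ℝ} (hρ : 0 ≤ ρ) (hρρ' : ρ ≤ ρ') : Tset K C ρ' ⊆ Tset K C ρ := by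
  intro t ht
  rw [mem_Tset_iff] at ht ⊢
  intro c hc
  rcases eq_or_lt_of_le (hρ.trans hρρ') with h0' | h0'
  · have : ρ = 0 := le_antisymm (hρρ'.trans h0'.symm.le) hρ
    rw [this]
    have := ht c hc
    have h2 := ht 0 h0
    simpa [← h0'] using h2
  · have hc' : (ρ/ρ') • c + (1 - ρ/ρ') • (0:EuclideanSpace ℝ (Fin d)) ∈ C :=
      hCconv hc h0 (by positivity) (by
        have := div_le_one_of_le₀ hρρ' h0'.le
        linarith) (by ring)
    have := ht _ hc'
    have heq : ρ' • ((ρ/ρ') • c + (1 - ρ/ρ') • (0:EuclideanSpace ℝ (Fin d))) = ρ • c := by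
      simp [smul_smul]
      rw [mul_div_cancel₀]
      exact h0'.ne'
    rwa [heq] at this

lemma roundedBody_subset {ρ : ℝ} : roundedBody K C ρ ⊆ K := by
  simp only [roundedBody]
  exact iUnion₂_subset fun t ht => ht

lemma subset_roundedBody {ρ : ℝ} {t : EuclideanSpace ℝ (Fin d)} (ht : t ∈ Tset K C ρ) :
    (fun x => t + ρ • x) '' C ⊆ roundedBody K C ρ :=
  subset_iUnion₂ (s := fun t _ => (fun x => t + ρ • x) '' C) t ht

lemma roundedBody_eq_image {ρ : ℝ} :
    roundedBody K C ρ = (fun p : _ × _ => p.1 + ρ • p.2) '' (Tset K C ρ ×ˢ C) := by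
  ext x
  rw [mem_roundedBody_iff]
  constructor
  · rintro ⟨t, ht, c, hc, rfl⟩; exact ⟨(t, c), ⟨ht, hc⟩, rfl⟩
  · rintro ⟨⟨t, c⟩, ⟨ht, hc⟩, rfl⟩; exact ⟨t, ht, c, hc, rfl⟩

lemma roundedBody_isCompact (hK : IsCompact K) (hC : IsCompact C)
    (h0 : (0:EuclideanSpace ℝ (Fin d)) ∈ C) {ρ : ℝ} : IsCompact (roundedBody K C ρ) := by
  rw [roundedBody_eq_image]
  exact ((Tset_isCompact hK h0).prod hC).image
    (continuous_fst.add (continuous_snd.const_smul ρ))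

lemma roundedBody_zero (hCne : C.Nonempty) : roundedBody K C 0 = K := by
  apply le_antisymm roundedBody_subset
  intro x hx
  rw [mem_roundedBody_iff]
  obtain ⟨c, hc⟩ := hCne
  exact ⟨x, mem_Tset_iff.2 fun c' _ => by simpa using hx, c, hc, by simp⟩

lemma roundedBody_anti (hCconv : Convex ℝ C) {ρ ρ' : ℝ} (hρ : 0 ≤ ρ) (hρρ' : ρ ≤ ρ') :
    roundedBody K C ρ' ⊆ roundedBody K C ρ := by
  rcases eq_or_lt_of_le (hρ.trans hρρ') with h0' | h0'
  · have : ρ = 0 := le_antisymm (hρρ'.trans h0'.symm.le) hρ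
    rw [this, ← h0']
  · intro x hx
    rw [mem_roundedBody_iff] at hx ⊢
    obtain ⟨t, ht, c, hc, rfl⟩ := hx
    refine ⟨t + (ρ' - ρ) • c, ?_, c, hc, by
      rw [add_assoc, ← add_smul, sub_add_cancel]⟩
    rw [mem_Tset_iff]
    intro c' hc'
    have hcomb : ((ρ' - ρ)/ρ') • c + (ρ/ρ') • c' ∈ C := by
      apply hCconv hc hc' (div_nonneg (by linarith) h0'.le) (by positivity)
      field_simp; ring
    have := mem_Tset_iff.1 ht _ hcomb
    have heq : t + ρ' • (((ρ' - ρ)/ρ') • c + (ρ/ρ') • c') = t + (ρ' - ρ) • c + ρ • c' := by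
      rw [smul_add, smul_smul, smul_smul, mul_div_cancel₀ _ h0'.ne', mul_div_cancel₀ _ h0'.ne',
        add_assoc]
    rwa [heq] at this

lemma roundedBody_combo (hKconv : Convex ℝ K) (hCconv : Convex ℝ C) (hCne : C.Nonempty)
    (h0 : (0:EuclideanSpace ℝ (Fin d)) ∈ C)
    {ρ1 ρ2 a b : ℝ} (hρ1 : 0 ≤ ρ1) (hρ2 : 0 ≤ ρ2) (ha : 0 ≤ a) (hb : 0 ≤ b)
    (hab : a + b = 1) {x y : EuclideanSpace ℝ (Fin d)}
    (hx : x ∈ roundedBody K C ρ1) (hy : y ∈ roundedBody K C ρ2) :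
    a • x + b • y ∈ roundedBody K C (a * ρ1 + b * ρ2) := by
  obtain ⟨t1, ht1, c1, hc1, rfl⟩ := mem_roundedBody_iff.1 hx
  obtain ⟨t2, ht2, c2, hc2, rfl⟩ := mem_roundedBody_iff.1 hy
  set σ := a * ρ1 + b * ρ2 with hσ
  have hσ0 : 0 ≤ σ := by positivity
  rcases eq_or_lt_of_le hσ0 with hz | hz
  · -- σ = 0 : then a*ρ1 = 0 and b*ρ2 = 0
    have h1 : a * ρ1 = 0 := by nlinarith
    have h2 : b * ρ2 = 0 := by nlinarith
    have hxy : a • (t1 + ρ1 • c1) + b • (t2 + ρ2 • c2) = a • t1 + b • t2 := by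
      rw [smul_add, smul_add, smul_smul, smul_smul, h1, h2]
      simp
    rw [hxy, ← hz, roundedBody_zero hCne]
    exact hKconv (Tset_subset h0 ht1) (Tset_subset h0 ht2) ha hb hab
  · rw [mem_roundedBody_iff]
    have hcc : ((a*ρ1)/σ) • c1 + ((b*ρ2)/σ) • c2 ∈ C := by
      apply hCconv hc1 hc2 (by positivity) (by positivity)
      field_simp; exact hσ.symm
    refine ⟨a • t1 + b • t2, ?_, _, hcc, ?_⟩
    · rw [mem_Tset_iff]
      intro c hc
      have hk1 := mem_Tset_iff.1 ht1 c hc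
      have hk2 := mem_Tset_iff.1 ht2 c hc
      have := hKconv hk1 hk2 ha hb hab
      have heq : a • (t1 + ρ1 • c) + b • (t2 + ρ2 • c)
          = a • t1 + b • t2 + σ • c := by
        rw [smul_add, smul_add, smul_smul, smul_smul, hσ, add_smul]
        abel
      rwa [heq] at this
    · rw [smul_add, smul_smul, smul_smul, mul_div_cancel₀ _ hz.ne', mul_div_cancel₀ _ hz.ne',
        smul_add, smul_add, smul_smul, smul_smul]
      abel

lemma Tset_convex (hKconv : Convex ℝ K) {ρ : ℝ} : Convex ℝ (Tset K C ρ) := by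
  intro t1 ht1 t2 ht2 a b ha hb hab
  rw [mem_Tset_iff]
  intro c hc
  have := hKconv (mem_Tset_iff.1 ht1 c hc) (mem_Tset_iff.1 ht2 c hc) ha hb hab
  have heq : a • (t1 + ρ • c) + b • (t2 + ρ • c) = a • t1 + b • t2 + ρ • c := by
    rw [smul_add, smul_add, smul_smul, smul_smul, ← add_assoc]
    rw [show a • t1 + (a * ρ) • c + b • t2 + (b * ρ) • c
        = a • t1 + b • t2 + ((a * ρ) • c + (b * ρ) • c) by abel, ← add_smul]
    rw [show a * ρ + b * ρ = ρ by rw [← add_mul, hab, one_mul]]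
  rwa [heq] at this

lemma exists_normal (hKconv : Convex ℝ K) (hC : IsCompact C) {r : ℝ} (hr : 0 < r)
    (hrmax : IsGreatest
      {l : ℝ | 0 ≤ l ∧ ∃ t : EuclideanSpace ℝ (Fin d), (fun x => t + l • x) '' C ⊆ K} r) :
    ∃ u : EuclideanSpace ℝ (Fin d), ‖u‖ = 1 ∧
      ∀ t ∈ Tset K C r, ∀ t' ∈ Tset K C r, (⟪t, u⟫:ℝ) = ⟪t', u⟫ := by
  obtain ⟨t0, ht0⟩ := hrmax.1.2
  have ht0' : t0 ∈ Tset K C r := ht0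
  -- a bound on C
  obtain ⟨R, hR⟩ := hC.isBounded.subset_closedBall 0
  set R' : ℝ := max R 1 with hR'def
  have hR'pos : 0 < R' := lt_of_lt_of_le one_pos (le_max_right _ _)
  have hR' : C ⊆ Metric.closedBall 0 R' := hR.trans
    (Metric.closedBall_subset_closedBall (le_max_left _ _))
  -- the interior of `Tset K C r` is empty
  have hint : interior (Tset K C r) = ∅ := by
    by_contra h
    obtain ⟨x, hx⟩ := nonempty_iff_ne_empty.2 h
    obtain ⟨ε, hε, hball⟩ := Metric.isOpen_iff.1 isOpen_interior x hx
    have hmem : r + ε / (2 * R') ∈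
        {l : ℝ | 0 ≤ l ∧ ∃ t : EuclideanSpace ℝ (Fin d), (fun x => t + l • x) '' C ⊆ K} := by
      refine ⟨by positivity, x, ?_⟩
      rintro _ ⟨c, hc, rfl⟩
      have hx' : x + (ε / (2 * R')) • c ∈ Tset K C r := by
        apply interior_subset
        apply hball
        rw [Metric.mem_ball, dist_eq_norm]
        have hcnorm : ‖c‖ ≤ R' := by simpa [Metric.mem_closedBall, dist_eq_norm] using hR' hc
        have : ‖x + (ε / (2 * R')) • c - x‖ = (ε / (2 * R')) * ‖c‖ := by
          rw [add_sub_cancel_left, norm_smul, Real.norm_eq_abs, abs_of_pos (by positivity)]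
        rw [this]
        calc (ε / (2 * R')) * ‖c‖ ≤ (ε / (2 * R')) * R' := by
              apply mul_le_mul_of_nonneg_left hcnorm (by positivity)
          _ = ε / 2 := by field_simp
          _ < ε := by linarith
      have := mem_Tset_iff.1 hx' c hc
      have heq : x + (ε / (2 * R')) • c + r • c = x + (r + ε / (2 * R')) • c := by
        rw [add_assoc, ← add_smul, add_comm (ε / (2 * R'))]
      rwa [heq] at this
    have := hrmax.2 hmem
    have : (0:ℝ) < ε / (2 * R') := by positivity
    linarith [hrmax.2 hmem]
  -- so its affine span is not all of space
  have hspan : affineSpan ℝ (Tset K C r) ≠ ⊤ := by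
    intro h
    have := (Tset_convex hKconv).interior_nonempty_iff_affineSpan_eq_top.2 h
    rw [hint] at this
    exact not_nonempty_empty this
  have hdir : (affineSpan ℝ (Tset K C r)).direction ≠ ⊤ := by
    intro h
    exact hspan ((AffineSubspace.direction_eq_top_iff_of_nonempty
      ((affineSpan_nonempty ℝ).2 ⟨t0, ht0'⟩)).1 h)
  have horth : ((affineSpan ℝ (Tset K C r)).direction)ᗮ ≠ ⊥ := by
    intro h
    exact hdir (Submodule.orthogonal_eq_bot_iff.1 h)
  obtain ⟨u, hu, hu0⟩ := Submodule.ne_bot_iff _ |>.1 horth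
  refine ⟨‖u‖⁻¹ • u, norm_smul_inv_norm hu0, ?_⟩
  intro t ht t' ht'
  have hsub : t - t' ∈ (affineSpan ℝ (Tset K C r)).direction := by
    have := AffineSubspace.vsub_mem_direction (subset_affineSpan ℝ _ ht)
      (subset_affineSpan ℝ _ ht')
    simpa using this
  have h0 : (⟪t - t', u⟫:ℝ) = 0 := by
    have := (Submodule.mem_orthogonal _ u).1 hu _ hsub
    exact this
  have : (⟪t - t', ‖u‖⁻¹ • u⟫:ℝ) = 0 := by
    rw [real_inner_smul_right, h0, mul_zero]
  rw [inner_sub_left] at this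
  linarith

/-- As `ρ → r⁻`, the width of `Tset K C ρ` in the normal direction tends to `0`. -/
lemma Tset_width_small (hK : IsCompact K) (hCconv : Convex ℝ C)
    (h0C : (0:EuclideanSpace ℝ (Fin d)) ∈ C) {r : ℝ} (hr : 0 < r)
    {t0 u : EuclideanSpace ℝ (Fin d)} (ht0 : t0 ∈ Tset K C r)
    (hu : ∀ t ∈ Tset K C r, (⟪t, u⟫:ℝ) = ⟪t0, u⟫)
    {a : ℝ} (ha : 0 ≤ a) (har : a < r) {ε : ℝ} (hε : 0 < ε) :
    ∃ ρ, a ≤ ρ ∧ ρ < r ∧ dirWidth (Tset K C ρ) u ≤ ε := by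
  set α : ℝ := ⟪t0, u⟫ with hα
  have hTne : ∀ ρ ∈ Icc a r, (Tset K C ρ).Nonempty := fun ρ hρ =>
    ⟨t0, Tset_anti hCconv h0C (ha.trans hρ.1) hρ.2 ht0⟩
  have hTco : ∀ ρ : ℝ, IsCompact (Tset K C ρ) := fun ρ => Tset_isCompact hK h0C
  have hTr : ∀ x, (∀ ρ ∈ Ico a r, x ∈ Tset K C ρ) → x ∈ Tset K C r := by
    intro x hx
    rw [mem_Tset_iff]
    intro c hc
    have hclosed : IsClosed {s : ℝ | x + s • c ∈ K} :=
      hK.isClosed.preimage (by continuity)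
    have hsub : Ico a r ⊆ {s : ℝ | x + s • c ∈ K} := fun s hs =>
      mem_Tset_iff.1 (hx s hs) c hc
    have : r ∈ closure (Ico a r) := by
      rw [closure_Ico (ne_of_lt har)]
      exact ⟨le_of_lt har, le_refl r⟩
    exact hclosed.closure_subset_iff.2 hsub this
  haveI hne : Nonempty ↥(Ico a r) := ⟨⟨a, le_refl a, har⟩⟩
  -- Claim A : sSup gets close to α
  have claimA : ∃ ρ ∈ Ico a r, sSup ((fun x => ⟪x, u⟫) '' Tset K C ρ) ≤ α + ε/2 := by
    by_contra h
    push_neg at h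
    set A : ↥(Ico a r) → Set (EuclideanSpace ℝ (Fin d)) :=
      fun ρ => Tset K C ρ ∩ {x | α + ε/2 ≤ ⟪x, u⟫} with hA
    have hAcl : ∀ ρ, IsClosed (A ρ) := fun ρ =>
      (Tset_isClosed hK.isClosed).inter (isClosed_le continuous_const (contInner u))
    have hAco : ∀ ρ, IsCompact (A ρ) := fun ρ => (hTco ρ).inter_right
      (isClosed_le continuous_const (contInner u))
    have hAne : ∀ ρ, (A ρ).Nonempty := by
      rintro ⟨ρ, hρ⟩
      have := (imgCompact (hTco ρ) u).sSup_mem ((hTne ρ ⟨hρ.1, hρ.2.le⟩).image _)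
      obtain ⟨x, hx, hxe⟩ := this
      exact ⟨x, hx, le_of_lt (lt_of_lt_of_le (h ρ hρ) (le_of_eq hxe.symm))⟩
    have hAdir : Directed (· ⊇ ·) A := by
      rintro ⟨ρ1, hρ1⟩ ⟨ρ2, hρ2⟩
      refine ⟨⟨max ρ1 ρ2, le_max_of_le_left hρ1.1, max_lt hρ1.2 hρ2.2⟩, ?_, ?_⟩
      · exact inter_subset_inter (Tset_anti hCconv h0C (ha.trans hρ1.1) (le_max_left _ _))
          subset_rfl
      · exact inter_subset_inter (Tset_anti hCconv h0C (ha.trans hρ2.1) (le_max_right _ _))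
          subset_rfl
    obtain ⟨x, hx⟩ := IsCompact.nonempty_iInter_of_directed_nonempty_isCompact_isClosed
      A hAdir hAne hAco hAcl
    simp only [mem_iInter] at hx
    have hxr : x ∈ Tset K C r := hTr x fun ρ hρ => (hx ⟨ρ, hρ⟩).1
    have h1 : α + ε/2 ≤ ⟪x, u⟫ := (hx ⟨a, le_refl a, har⟩).2
    rw [hu x hxr] at h1
    linarith
  -- Claim B : sInf gets close to α
  have claimB : ∃ ρ ∈ Ico a r, α - ε/2 ≤ sInf ((fun x => ⟪x, u⟫) '' Tset K C ρ) := by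
    by_contra h
    push_neg at h
    set A : ↥(Ico a r) → Set (EuclideanSpace ℝ (Fin d)) :=
      fun ρ => Tset K C ρ ∩ {x | (⟪x, u⟫:ℝ) ≤ α - ε/2} with hA
    have hAcl : ∀ ρ, IsClosed (A ρ) := fun ρ =>
      (Tset_isClosed hK.isClosed).inter (isClosed_le (contInner u) continuous_const)
    have hAco : ∀ ρ, IsCompact (A ρ) := fun ρ => (hTco ρ).inter_right
      (isClosed_le (contInner u) continuous_const)
    have hAne : ∀ ρ, (A ρ).Nonempty := by
      rintro ⟨ρ, hρ⟩
      have := (imgCompact (hTco ρ) u).sInf_mem ((hTne ρ ⟨hρ.1, hρ.2.le⟩).image _)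
      obtain ⟨x, hx, hxe⟩ := this
      exact ⟨x, hx, le_of_lt (lt_of_le_of_lt (le_of_eq hxe) (h ρ hρ))⟩
    have hAdir : Directed (· ⊇ ·) A := by
      rintro ⟨ρ1, hρ1⟩ ⟨ρ2, hρ2⟩
      refine ⟨⟨max ρ1 ρ2, le_max_of_le_left hρ1.1, max_lt hρ1.2 hρ2.2⟩, ?_, ?_⟩
      · exact inter_subset_inter (Tset_anti hCconv h0C (ha.trans hρ1.1) (le_max_left _ _))
          subset_rfl
      · exact inter_subset_inter (Tset_anti hCconv h0C (ha.trans hρ2.1) (le_max_right _ _))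
          subset_rfl
    obtain ⟨x, hx⟩ := IsCompact.nonempty_iInter_of_directed_nonempty_isCompact_isClosed
      A hAdir hAne hAco hAcl
    simp only [mem_iInter] at hx
    have hxr : x ∈ Tset K C r := hTr x fun ρ hρ => (hx ⟨ρ, hρ⟩).1
    have h1 : (⟪x, u⟫:ℝ) ≤ α - ε/2 := (hx ⟨a, le_refl a, har⟩).2
    rw [hu x hxr] at h1
    linarith
  obtain ⟨ρA, hρA, hA⟩ := claimA
  obtain ⟨ρB, hρB, hB⟩ := claimB
  refine ⟨max ρA ρB, le_max_of_le_left hρA.1, max_lt hρA.2 hρB.2, ?_⟩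
  have hsubA : Tset K C (max ρA ρB) ⊆ Tset K C ρA :=
    Tset_anti hCconv h0C (ha.trans hρA.1) (le_max_left _ _)
  have hsubB : Tset K C (max ρA ρB) ⊆ Tset K C ρB :=
    Tset_anti hCconv h0C (ha.trans hρB.1) (le_max_right _ _)
  have hne' : ((fun x => ⟪x, u⟫) '' Tset K C (max ρA ρB)).Nonempty :=
    (hTne _ ⟨le_max_of_le_left hρA.1, (max_lt hρA.2 hρB.2).le⟩).image _
  have h1 : sSup ((fun x => ⟪x, u⟫) '' Tset K C (max ρA ρB)) ≤ α + ε/2 :=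
    le_trans (csSup_le_csSup (imgCompact (hTco ρA) u).bddAbove hne'
      (image_mono hsubA)) hA
  have h2 : α - ε/2 ≤ sInf ((fun x => ⟪x, u⟫) '' Tset K C (max ρA ρB)) :=
    le_trans hB (csInf_le_csInf (imgCompact (hTco ρB) u).bddBelow hne'
      (image_mono hsubB))
  simp only [dirWidth]
  linarith

end Lemmas2

lemma main_aux {d n : ℕ} (hd : 0 < d) (hn : 1 ≤ n)
    (K C : Set (EuclideanSpace ℝ (Fin d)))
    (hK : IsCompact K) (hKconv : Convex ℝ K)
    (hC : IsCompact C) (hCconv : Convex ℝ C) (hC0 : (0:EuclideanSpace ℝ (Fin d)) ∈ interior C)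
    (r : ℝ) (hr : 0 < r)
    (hrmax : IsGreatest
      {l : ℝ | 0 ≤ l ∧ ∃ t : EuclideanSpace ℝ (Fin d), (fun x => t + l • x) '' C ⊆ K} r) :
    ∃! ρ : ℝ, (0 < ρ ∧ ρ ≤ r) ∧ relMinWidth C (roundedBody K C ρ) = n * ρ := by
  have h0C : (0:EuclideanSpace ℝ (Fin d)) ∈ C := interior_subset hC0
  have hCne : C.Nonempty := ⟨0, h0C⟩
  obtain ⟨t0, ht0⟩ := hrmax.1.2
  have ht0' : t0 ∈ Tset K C r := ht0
  haveI : Nonempty {v : EuclideanSpace ℝ (Fin d) // ‖v‖ = 1} :=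
    ⟨⟨EuclideanSpace.single ⟨0, hd⟩ (1:ℝ), by rw [EuclideanSpace.norm_single]; simp⟩⟩
  set F : ℝ → ℝ := fun ρ => relMinWidth C (roundedBody K C ρ) with hFdef
  have hD : ∀ v : {v : EuclideanSpace ℝ (Fin d) // ‖v‖ = 1}, 0 < dirWidth C v :=
    fun v => dirWidth_pos_of_zero_mem_interior hC hC0 v.2
  have hRBco : ∀ ρ : ℝ, IsCompact (roundedBody K C ρ) :=
    fun ρ => roundedBody_isCompact hK hC h0C
  have hsubRB : ∀ ρ ∈ Icc (0:ℝ) r, (fun x => t0 + r • x) '' C ⊆ roundedBody K C ρ :=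
    fun ρ hρ => (subset_roundedBody ht0').trans (roundedBody_anti hCconv hρ.1 hρ.2)
  have hRBne : ∀ ρ ∈ Icc (0:ℝ) r, (roundedBody K C ρ).Nonempty :=
    fun ρ hρ => ⟨t0 + r • (0:EuclideanSpace ℝ (Fin d)), hsubRB ρ hρ ⟨0, h0C, rfl⟩⟩
  have hBdd : ∀ ρ ∈ Icc (0:ℝ) r, BddBelow (range fun v : {v : EuclideanSpace ℝ (Fin d) // ‖v‖ = 1}
      => dirWidth (roundedBody K C ρ) v / dirWidth C v) := by
    intro ρ hρ
    refine ⟨0, ?_⟩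
    rintro x ⟨v, rfl⟩
    exact div_nonneg (dirWidth_nonneg (hRBco ρ) (hRBne ρ hρ) v) (hD v).le
  have hlow : ∀ ρ ∈ Icc (0:ℝ) r, ∀ v : {v : EuclideanSpace ℝ (Fin d) // ‖v‖ = 1},
      r * dirWidth C v ≤ dirWidth (roundedBody K C ρ) v := by
    intro ρ hρ v
    rw [← dirWidth_translate_smul hC hCne t0 v hr.le]
    exact dirWidth_mono (hCne.image _) (hRBco ρ) (hsubRB ρ hρ) v
  have hFge : ∀ ρ ∈ Icc (0:ℝ) r, r ≤ F ρ := by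
    intro ρ hρ
    rw [hFdef]
    simp only [relMinWidth]
    exact le_ciInf fun v => (le_div_iff₀ (hD v)).2 (hlow ρ hρ v)
  have hFanti : ∀ ρ1 ∈ Icc (0:ℝ) r, ∀ ρ2 ∈ Icc (0:ℝ) r, ρ1 ≤ ρ2 → F ρ2 ≤ F ρ1 := by
    intro ρ1 h1 ρ2 h2 h12
    simp only [hFdef, relMinWidth]
    refine ciInf_mono (hBdd ρ2 h2) fun v => ?_
    exact div_le_div_of_nonneg_right
      (dirWidth_mono (hRBne ρ2 h2) (hRBco ρ1) (roundedBody_anti hCconv h1.1 h12) v) (hD v).le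
  have hconc : ConcaveOn ℝ (Icc (0:ℝ) r) F := by
    refine ⟨convex_Icc 0 r, ?_⟩
    intro ρ1 h1 ρ2 h2 a b ha hb hab
    simp only [smul_eq_mul, hFdef, relMinWidth]
    have hmem : a * ρ1 + b * ρ2 ∈ Icc (0:ℝ) r := by
      constructor
      · have := mul_nonneg ha h1.1; have := mul_nonneg hb h2.1; linarith
      · have := mul_le_mul_of_nonneg_left h1.2 ha
        have := mul_le_mul_of_nonneg_left h2.2 hb
        nlinarith
    apply le_ciInf
    intro v
    have hcombo : ∀ x ∈ roundedBody K C ρ1, ∀ y ∈ roundedBody K C ρ2,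
        a • x + b • y ∈ roundedBody K C (a * ρ1 + b * ρ2) :=
      fun x hx y hy => roundedBody_combo hKconv hCconv hCne h0C h1.1 h2.1 ha hb hab hx hy
    have hW := dirWidth_combo (hRBco ρ1) (hRBne ρ1 h1) (hRBco ρ2) (hRBne ρ2 h2)
      (hRBco (a * ρ1 + b * ρ2)) hcombo v
    have i1 : (⨅ u : {v : EuclideanSpace ℝ (Fin d) // ‖v‖ = 1},
        dirWidth (roundedBody K C ρ1) u / dirWidth C u)
        ≤ dirWidth (roundedBody K C ρ1) v / dirWidth C v := ciInf_le (hBdd ρ1 h1) v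
    have i2 : (⨅ u : {v : EuclideanSpace ℝ (Fin d) // ‖v‖ = 1},
        dirWidth (roundedBody K C ρ2) u / dirWidth C u)
        ≤ dirWidth (roundedBody K C ρ2) v / dirWidth C v := ciInf_le (hBdd ρ2 h2) v
    have hstep2 : a * (dirWidth (roundedBody K C ρ1) v / dirWidth C v)
        + b * (dirWidth (roundedBody K C ρ2) v / dirWidth C v)
        ≤ dirWidth (roundedBody K C (a * ρ1 + b * ρ2)) v / dirWidth C v := by
      have heq : a * (dirWidth (roundedBody K C ρ1) v / dirWidth C v)
          + b * (dirWidth (roundedBody K C ρ2) v / dirWidth C v)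
          = (a * dirWidth (roundedBody K C ρ1) v + b * dirWidth (roundedBody K C ρ2) v)
            / dirWidth C v := by ring
      rw [heq]
      exact div_le_div_of_nonneg_right hW (hD v).le
    have ha1 := mul_le_mul_of_nonneg_left i1 ha
    have hb1 := mul_le_mul_of_nonneg_left i2 hb
    linarith
  have hcont : ContinuousOn F (Ioo 0 r) := by
    have := hconc.continuousOn_interior
    rwa [interior_Icc] at this
  -- normal direction to `Tset K C r`
  obtain ⟨u0, hu0norm, hu0⟩ := exists_normal hKconv hC hr hrmax
  set v0 : {v : EuclideanSpace ℝ (Fin d) // ‖v‖ = 1} := ⟨u0, hu0norm⟩ with hv0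
  have hu0' : ∀ t ∈ Tset K C r, (⟪t, u0⟫:ℝ) = ⟪t0, u0⟫ := fun t ht => hu0 t ht t0 ht0'
  have hD0 : 0 < dirWidth C u0 := hD v0
  have hupper : ∀ ρ ∈ Icc (0:ℝ) r,
      F ρ ≤ (dirWidth (Tset K C ρ) u0 + ρ * dirWidth C u0) / dirWidth C u0 := by
    intro ρ hρ
    have hTne : (Tset K C ρ).Nonempty := ⟨t0, Tset_anti hCconv h0C hρ.1 hρ.2 ht0'⟩
    have h1 : dirWidth (roundedBody K C ρ) u0
        ≤ dirWidth (Tset K C ρ) u0 + ρ * dirWidth C u0 := by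
      rw [roundedBody_eq_image]
      exact dirWidth_decomp_upper (Tset_isCompact hK h0C) hTne hC hCne hρ.1 u0
    calc F ρ ≤ dirWidth (roundedBody K C ρ) v0 / dirWidth C v0 := by
          simp only [hFdef, relMinWidth]; exact ciInf_le (hBdd ρ hρ) v0
      _ ≤ (dirWidth (Tset K C ρ) u0 + ρ * dirWidth C u0) / dirWidth C u0 :=
          div_le_div_of_nonneg_right h1 hD0.le
  have hTr0 : dirWidth (Tset K C r) u0 = 0 := by
    have himg : (fun x => ⟪x, u0⟫) '' Tset K C r = {(⟪t0, u0⟫:ℝ)} := by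
      apply eq_singleton_iff_nonempty_unique_mem.2
      exact ⟨⟨_, ⟨t0, ht0', rfl⟩⟩, by rintro z ⟨t, ht, rfl⟩; exact hu0' t ht⟩
    rw [dirWidth, himg]
    simp
  have hFr : F r ≤ r := by
    have := hupper r ⟨hr.le, le_refl r⟩
    rw [hTr0, zero_add, mul_div_assoc, div_self hD0.ne', mul_one] at this
    exact this
  -- uniqueness
  have huniq : ∀ ρ ρ' : ℝ, ((0 < ρ ∧ ρ ≤ r) ∧ F ρ = n * ρ) →
      ((0 < ρ' ∧ ρ' ≤ r) ∧ F ρ' = n * ρ') → ρ = ρ' := by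
    have hnpos : (0:ℝ) < n := by exact_mod_cast Nat.lt_of_lt_of_le Nat.zero_lt_one hn
    intro ρ ρ' h h'
    rcases lt_trichotomy ρ ρ' with hlt | heq | hlt
    · exfalso
      have := hFanti ρ ⟨h.1.1.le, h.1.2⟩ ρ' ⟨h'.1.1.le, h'.1.2⟩ hlt.le
      rw [h.2, h'.2] at this
      have := le_of_mul_le_mul_left (by linarith : (n:ℝ) * ρ' ≤ n * ρ) hnpos
      linarith
    · exact heq
    · exfalso
      have := hFanti ρ' ⟨h'.1.1.le, h'.1.2⟩ ρ ⟨h.1.1.le, h.1.2⟩ hlt.le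
      rw [h.2, h'.2] at this
      have := le_of_mul_le_mul_left (by linarith : (n:ℝ) * ρ ≤ n * ρ') hnpos
      linarith
  -- existence
  rcases eq_or_lt_of_le hn with hn1 | hn2
  · -- n = 1 : take ρ = r
    have hFr' : F r = r := le_antisymm hFr (hFge r ⟨hr.le, le_refl r⟩)
    have : F r = (n:ℝ) * r := by rw [hFr', ← hn1]; norm_num
    exact ⟨r, ⟨⟨hr, le_refl r⟩, this⟩, fun y hy => huniq y r hy ⟨⟨hr, le_refl r⟩, this⟩⟩
  · -- n ≥ 2
    have hn2' : (1:ℝ) < n := by exact_mod_cast hn2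
    set δ : ℝ := ((n:ℝ) - 1) * r / 8 with hδ
    have hδpos : 0 < δ := by rw [hδ]; nlinarith
    obtain ⟨ρ1, hρ1a, hρ1r, hsmall⟩ := Tset_width_small hK hCconv h0C hr ht0' hu0'
      (a := r/2) (by positivity) (by linarith) (ε := δ * dirWidth C u0) (by positivity)
    have hρ1pos : 0 < ρ1 := lt_of_lt_of_le (by positivity) hρ1a
    have hFρ1 : F ρ1 < (n:ℝ) * ρ1 := by
      have h1 := hupper ρ1 ⟨hρ1pos.le, hρ1r.le⟩
      have h2 : (dirWidth (Tset K C ρ1) u0 + ρ1 * dirWidth C u0) / dirWidth C u0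
          ≤ δ + ρ1 := by
        rw [div_le_iff₀ hD0]
        nlinarith [hsmall]
      have h3 : δ + ρ1 < (n:ℝ) * ρ1 := by nlinarith
      linarith
    set ρa : ℝ := min ρ1 (r / n) / 2 with hρa
    have hrn : (0:ℝ) < r / n := by positivity
    have hρapos : 0 < ρa := by rw [hρa]; positivity
    have hρa1 : ρa < ρ1 := by
      rw [hρa]
      have : min ρ1 (r/n) ≤ ρ1 := min_le_left _ _
      have : 0 < min ρ1 (r/n) := lt_min hρ1pos hrn
      linarith [min_le_left ρ1 (r/n)]
    have hFρa : (n:ℝ) * ρa < F ρa := by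
      have h1 : ρa < r / n := by
        rw [hρa]
        have h2 : 0 < min ρ1 (r/n) := lt_min hρ1pos hrn
        linarith [min_le_right ρ1 (r/n)]
      have h2 : (n:ℝ) * ρa < r := by
        rw [lt_div_iff₀ (by positivity : (0:ℝ) < n)] at h1
        linarith [h1]
      have h3 := hFge ρa ⟨hρapos.le, by linarith⟩
      linarith
    -- intermediate value theorem on [ρa, ρ1]
    set φ : ℝ → ℝ := fun ρ => F ρ - n * ρ with hφ
    have hsub : Icc ρa ρ1 ⊆ Ioo 0 r := fun x hx => ⟨lt_of_lt_of_le hρapos hx.1,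
      lt_of_le_of_lt hx.2 hρ1r⟩
    have hφcont : ContinuousOn φ (Icc ρa ρ1) :=
      ((hcont.mono hsub).sub (continuousOn_const.mul continuousOn_id))
    have hIVT := intermediate_value_Icc' (le_of_lt hρa1) hφcont
    have h0mem : (0:ℝ) ∈ Icc (φ ρ1) (φ ρa) := by
      constructor
      · rw [hφ]; simp only; linarith
      · rw [hφ]; simp only; linarith
    obtain ⟨ρx, hρxmem, hρx⟩ := hIVT h0mem
    have hρxpos : 0 < ρx := lt_of_lt_of_le hρapos hρxmem.1
    have hρxr : ρx ≤ r := le_of_lt (lt_of_le_of_lt hρxmem.2 hρ1r)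
    have hFρx : F ρx = (n:ℝ) * ρx := by
      have : F ρx - n * ρx = 0 := hρx
      linarith
    exact ⟨ρx, ⟨⟨hρxpos, hρxr⟩, hFρx⟩, fun y hy => huniq y ρx hy ⟨⟨hρxpos, hρxr⟩, hFρx⟩⟩

/-- **Existence and uniqueness of the `n`-th successive `C`-inradius.** Let `K`, `C` be
convex bodies in `ℝ^d`, let `r > 0` be the `C`-inradius of `K`, and let `n ≥ 1`. Then
there is a unique `ρ ∈ (0, r]` with `w_C(K^{ρC}) = n·ρ`. -/
theorem successive_inradius_exists_unique {d n : ℕ} (hn : 1 ≤ n)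
    (K C : Set (EuclideanSpace ℝ (Fin d)))
    (hK : IsCompact K) (hKconv : Convex ℝ K) (hKint : (interior K).Nonempty)
    (hC : IsCompact C) (hCconv : Convex ℝ C) (hCint : (interior C).Nonempty)
    (r : ℝ) (hr : 0 < r)
    (hrmax : IsGreatest
      {l : ℝ | 0 ≤ l ∧ ∃ t : EuclideanSpace ℝ (Fin d), (fun x => t + l • x) '' C ⊆ K} r) :
    ∃! ρ : ℝ, (0 < ρ ∧ ρ ≤ r) ∧ relMinWidth C (roundedBody K C ρ) = n * ρ := by
  rcases Nat.eq_zero_or_pos d with hd0 | hd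
  · exfalso
    subst hd0
    obtain ⟨k0, hk0⟩ : K.Nonempty := hKint.mono interior_subset
    have hmem : r + 1 ∈
        {l : ℝ | 0 ≤ l ∧ ∃ t : EuclideanSpace ℝ (Fin 0), (fun x => t + l • x) '' C ⊆ K} := by
      refine ⟨by linarith, k0, ?_⟩
      rintro _ ⟨c, hc, rfl⟩
      have : k0 + (r+1) • c = k0 := Subsingleton.elim _ _
      show k0 + (r+1) • c ∈ K
      rw [this]; exact hk0
    have := hrmax.2 hmem
    linarith
  · obtain ⟨c0, hc0⟩ := hCint
    have hc0C : c0 ∈ C := interior_subset hc0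
    have hCne : C.Nonempty := ⟨c0, hc0C⟩
    set C' : Set (EuclideanSpace ℝ (Fin d)) := (fun x => -c0 + x) '' C with hC'
    have hC'comp : IsCompact C' := hC.image (continuous_const.add continuous_id)
    have hC'conv : Convex ℝ C' := hCconv.translate (-c0)
    have h0C' : (0:EuclideanSpace ℝ (Fin d)) ∈ interior C' := by
      have hhe : interior C' = (fun x => -c0 + x) '' interior C := by
        rw [hC']
        exact ((Homeomorph.addLeft (-c0)).image_interior C).symm
      rw [hhe]
      exact ⟨c0, hc0, by abel⟩
    have himg : ∀ (t : EuclideanSpace ℝ (Fin d)) (l : ℝ),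
        (fun x => t + l • x) '' C' = (fun x => (t - l • c0) + l • x) '' C := by
      intro t l
      rw [hC', image_image]
      apply image_congr
      intro c _
      rw [smul_add, smul_neg]
      abel
    have hset : {l : ℝ | 0 ≤ l ∧ ∃ t : EuclideanSpace ℝ (Fin d), (fun x => t + l • x) '' C' ⊆ K}
        = {l : ℝ | 0 ≤ l ∧ ∃ t : EuclideanSpace ℝ (Fin d), (fun x => t + l • x) '' C ⊆ K} := by
      ext l
      simp only [mem_setOf_eq, and_congr_right_iff]
      intro _
      constructor
      · rintro ⟨t, ht⟩
        exact ⟨t - l • c0, by rwa [himg t l] at ht⟩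
      · rintro ⟨t, ht⟩
        refine ⟨t + l • c0, ?_⟩
        rw [himg (t + l • c0) l, add_sub_cancel_right]
        exact ht
    have hRB : ∀ ρ : ℝ, roundedBody K C' ρ = roundedBody K C ρ := by
      intro ρ
      unfold roundedBody
      ext x
      simp only [mem_iUnion, mem_setOf_eq, exists_prop]
      constructor
      · rintro ⟨t, ht, hx⟩
        rw [himg t ρ] at ht hx
        exact ⟨t - ρ • c0, ht, hx⟩
      · rintro ⟨t, ht, hx⟩
        refine ⟨t + ρ • c0, ?_, ?_⟩
        · rw [himg (t + ρ • c0) ρ, add_sub_cancel_right]; exact ht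
        · rw [himg (t + ρ • c0) ρ, add_sub_cancel_right]; exact hx
    have hW : ∀ Q : Set (EuclideanSpace ℝ (Fin d)), relMinWidth C' Q = relMinWidth C Q := by
      intro Q
      unfold relMinWidth
      apply iInf_congr
      intro u
      have hC'eq : C' = (fun c => -c0 + (1:ℝ) • c) '' C := by
        rw [hC']; apply image_congr; intro c _; rw [one_smul]
      rw [hC'eq, dirWidth_translate_smul hC hCne (-c0) u zero_le_one, one_mul]
    have hmain := main_aux hd hn K C' hK hKconv hC'comp hC'conv h0C' r hr
      (by rw [hset]; exact hrmax)
    have heq : ∀ ρ : ℝ, relMinWidth C' (roundedBody K C' ρ)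
        = relMinWidth C (roundedBody K C ρ) := fun ρ => by rw [hRB ρ, hW]
    simpa only [heq] using hmain
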